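/- Let n ≥ 1 be an integer, C > 0 and r > 0 real numbers, and let V : (0, r] → ℝ be a positive differentiable function satisfying V′(s)/V(s) ≥ n/s − C/r for all s ∈ (0, r]. If lim_{ε→0⁺} V(ε)/ε^n = ω_n, where ω_n is the volume of the unit ball in ℝ^n, then V(r) ≥ ω_n·e^{−C}·r^n. -/

import Mathlib

/-- Analytic core of Lemma 3.1: a logarithmic differential inequality together
with Euclidean density of small balls forces `V r ≥ ω_n e^{-C} r^n`. -/
theorem ball_volume_lower_bound (n : ℕ) (hn : 1 ≤ n) (C r : ℝ) (hC : 0 < C) (hr : 0 < r)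
    (V V' : ℝ → ℝ)
    (hVpos : ∀ s ∈ Set.Ioc (0 : ℝ) r, 0 < V s)
    (hderiv : ∀ s ∈ Set.Ioc (0 : ℝ) r, HasDerivAt V (V' s) s)
    (hineq : ∀ s ∈ Set.Ioc (0 : ℝ) r, V' s / V s ≥ (n : ℝ) / s - C / r)
    (hlim : Filter.Tendsto (fun ε => V ε / ε ^ n) (nhdsWithin 0 (Set.Ioi 0))
      (nhds ((MeasureTheory.volume (Metric.ball (0 : EuclideanSpace ℝ (Fin n)) 1)).toReal))) :
    V r ≥ (MeasureTheory.volume (Metric.ball (0 : EuclideanSpace ℝ (Fin n)) 1)).toReal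
      * Real.exp (-C) * r ^ n := by
  set ω := (MeasureTheory.volume (Metric.ball (0 : EuclideanSpace ℝ (Fin n)) 1)).toReal with hωdef
  have hωpos : 0 < ω := by
    apply ENNReal.toReal_pos
    · exact (Metric.measure_ball_pos _ _ one_pos).ne'
    · exact (MeasureTheory.measure_ball_lt_top).ne
  set g : ℝ → ℝ := fun s => Real.log (V s) - n * Real.log s + C * s / r with hgdef
  have hgderiv : ∀ s ∈ Set.Ioc (0 : ℝ) r,
      HasDerivAt g (V' s / V s - n / s + C / r) s := by
    intro s hs
    have h1 : HasDerivAt (fun t => Real.log (V t)) (V' s / V s) s :=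
      (hderiv s hs).log (hVpos s hs).ne'
    have h2 : HasDerivAt (fun t => (n : ℝ) * Real.log t) ((n : ℝ) * s⁻¹) s :=
      (Real.hasDerivAt_log hs.1.ne').const_mul _
    have h3 : HasDerivAt (fun t => C * t / r) (C * 1 / r) s :=
      ((hasDerivAt_id s).const_mul C).div_const r
    have := (h1.sub h2).add h3
    exact this.congr_deriv (by ring)
  have key : ∀ a ∈ Set.Ioc (0 : ℝ) r, g a ≤ g r := by
    intro a ha
    have hsub : Set.Icc a r ⊆ Set.Ioc 0 r := fun x hx => ⟨lt_of_lt_of_le ha.1 hx.1, hx.2⟩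
    have hmono : MonotoneOn g (Set.Icc a r) := by
      apply monotoneOn_of_deriv_nonneg (convex_Icc a r)
      · exact fun x hx => (hgderiv x (hsub hx)).continuousAt.continuousWithinAt
      · intro x hx
        rw [interior_Icc] at hx
        exact (hgderiv x (hsub (Set.mem_Icc_of_Ioo hx))).differentiableAt.differentiableWithinAt
      · intro x hx
        rw [interior_Icc] at hx
        have hx' := hsub (Set.mem_Icc_of_Ioo hx)
        rw [(hgderiv x hx').deriv]
        have := hineq x hx'
        linarith
    exact hmono (Set.left_mem_Icc.2 ha.2) (Set.right_mem_Icc.2 ha.2) ha.2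
  have hlog : Filter.Tendsto (fun a => Real.log (V a / a ^ n))
      (nhdsWithin 0 (Set.Ioi 0)) (nhds (Real.log ω)) :=
    ((Real.continuousAt_log hωpos.ne').tendsto).comp hlim
  have hlin : Filter.Tendsto (fun a : ℝ => C * a / r)
      (nhdsWithin 0 (Set.Ioi 0)) (nhds 0) := by
    have h : Filter.Tendsto (fun a : ℝ => C * a / r) (nhds 0) (nhds (C * 0 / r)) :=
      (Continuous.tendsto (by continuity) 0)
    simpa using h.mono_left nhdsWithin_le_nhds
  have hsum : Filter.Tendsto (fun a => Real.log (V a / a ^ n) + C * a / r)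
      (nhdsWithin 0 (Set.Ioi 0)) (nhds (Real.log ω)) := by
    simpa using hlog.add hlin
  have hfinal : Real.log ω ≤ g r := by
    refine le_of_tendsto hsum ?_
    filter_upwards [Ioc_mem_nhdsGT_of_mem (Set.left_mem_Ico.2 hr)] with a ha
    have hVa := hVpos a ha
    have hane : a ≠ 0 := ha.1.ne'
    have heq : Real.log (V a / a ^ n) + C * a / r = g a := by
      rw [Real.log_div hVa.ne' (pow_ne_zero _ hane), Real.log_pow]
    rw [heq]
    exact key a ha
  have hgr : g r = Real.log (V r) - n * Real.log r + C := by
    simp [hgdef, mul_div_assoc, div_self hr.ne']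
  rw [hgr] at hfinal
  have hexp : Real.exp (Real.log ω + (n : ℝ) * Real.log r - C) ≤
      Real.exp (Real.log (V r)) := Real.exp_le_exp.2 (by linarith)
  rw [Real.exp_log (hVpos r ⟨hr, le_refl r⟩)] at hexp
  have hLHS : Real.exp (Real.log ω + (n : ℝ) * Real.log r - C)
      = ω * Real.exp (-C) * r ^ n := by
    rw [show Real.log ω + (n : ℝ) * Real.log r - C
        = Real.log ω + (-C) + (n : ℝ) * Real.log r by ring,
      Real.exp_add, Real.exp_add, Real.exp_log hωpos]
    rw [show ((n : ℝ) * Real.log r) = ((n : ℕ) : ℝ) * Real.log r from rfl, Real.exp_nat_mul,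
      Real.exp_log hr]
  rw [hLHS] at hexp
  exact hexp
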